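/- arXiv:1311.3023 — 6 statements merged into one kernel-verified Lean document; each statement's English description precedes it below -/
import Mathlib

section
/- Let A ≻ 0 and B ⪰ 0 be n×n Hermitian matrices with B ≠ 0. Then for a nonnegative real μ, the matrix A − μB is positive semidefinite if and only if μ ≤ μ₊(A,B), where μ₊(A,B) = inf{x^H A x : x^H B x = 1}. -/
open Matrix ComplexOrder

noncomputable def quadForm {n : ℕ} (A : Matrix (Fin n) (Fin n) ℂ) (x : Fin n → ℂ) : ℝ :=
  (star x ⬝ᵥ A.mulVec x).re

noncomputable def muPlus {n : ℕ} (A B : Matrix (Fin n) (Fin n) ℂ) : ℝ :=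
  sInf {r : ℝ | ∃ x : Fin n → ℂ, quadForm B x = 1 ∧ quadForm A x = r}

lemma herm_im {n : ℕ} {M : Matrix (Fin n) (Fin n) ℂ} (hM : M.IsHermitian)
    (x : Fin n → ℂ) : (star x ⬝ᵥ M.mulVec x).im = 0 := by
  have h : star (star x ⬝ᵥ M.mulVec x) = star x ⬝ᵥ M.mulVec x := by
    rw [← star_dotProduct_star, star_star, star_mulVec, hM.eq, dotProduct_mulVec]
  have := congrArg Complex.im h
  simp only [Complex.star_def, Complex.conj_im] at this
  linarith

lemma quad_smul {n : ℕ} (M : Matrix (Fin n) (Fin n) ℂ) (r : ℝ) (x : Fin n → ℂ) :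
    quadForm M ((r : ℂ) • x) = r ^ 2 * quadForm M x := by
  simp only [quadForm, star_smul, mulVec_smul, smul_dotProduct, dotProduct_smul,
    smul_eq_mul, Complex.star_def, Complex.conj_ofReal]
  rw [← mul_assoc, ← Complex.ofReal_mul]
  simp [pow_two, Complex.mul_re]

lemma quad_sub {n : ℕ} (A B : Matrix (Fin n) (Fin n) ℂ) (μ : ℝ) (x : Fin n → ℂ) :
    quadForm (A - (μ : ℂ) • B) x = quadForm A x - μ * quadForm B x := by
  simp [quadForm, sub_mulVec, smul_mulVec, dotProduct_sub, dotProduct_smul,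
    smul_eq_mul, Complex.sub_re, Complex.mul_re]

lemma quad_nonneg {n : ℕ} {M : Matrix (Fin n) (Fin n) ℂ} (hM : M.PosSemidef)
    (x : Fin n → ℂ) : 0 ≤ quadForm M x := (Complex.nonneg_iff.mp (hM.dotProduct_mulVec_nonneg x)).1

lemma herm_sub {n : ℕ} {A B : Matrix (Fin n) (Fin n) ℂ} (hA : A.IsHermitian)
    (hB : B.IsHermitian) (μ : ℝ) : (A - (μ : ℂ) • B).IsHermitian := by
  apply hA.sub
  unfold Matrix.IsHermitian
  rw [conjTranspose_smul, hB.eq]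
  simp

theorem stmt3 {n : ℕ} (A B : Matrix (Fin n) (Fin n) ℂ)
    (hA : A.PosDef) (hB : B.PosSemidef) (hB0 : B ≠ 0)
    (μ : ℝ) (hμ0 : 0 ≤ μ) :
    (A - (μ : ℂ) • B).PosSemidef ↔ μ ≤ muPlus A B := by
  set S : Set ℝ := {r : ℝ | ∃ x : Fin n → ℂ, quadForm B x = 1 ∧ quadForm A x = r} with hS
  -- normalization: from quadForm B x > 0 produce y with quadForm B y = 1
  have hnorm : ∀ x : Fin n → ℂ, 0 < quadForm B x →
      ∃ y : Fin n → ℂ, quadForm B y = 1 ∧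
        quadForm A x = quadForm B x * quadForm A y := by
    intro x hx
    set t := quadForm B x with ht
    have hst : (0:ℝ) < Real.sqrt t := Real.sqrt_pos.mpr hx
    have hsq : (Real.sqrt t) ^ 2 = t := Real.sq_sqrt hx.le
    refine ⟨(((Real.sqrt t)⁻¹ : ℝ) : ℂ) • x, ?_, ?_⟩
    · rw [quad_smul, inv_pow, hsq, inv_mul_cancel₀ hx.ne']
    · rw [quad_smul, inv_pow, hsq, ← mul_assoc, mul_inv_cancel₀ hx.ne', one_mul]
  -- there is x₀ with quadForm B x₀ > 0
  obtain ⟨x₀, hx₀⟩ : ∃ x, 0 < quadForm B x := by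
    by_contra h
    push_neg at h
    apply hB0
    have hz : ∀ x, B.mulVec x = 0 := by
      intro x
      rw [← hB.dotProduct_mulVec_zero_iff]
      have h1 := quad_nonneg hB x
      have h2 := h x
      have h3 := herm_im hB.1 x
      apply Complex.ext
      · simpa [quadForm] using le_antisymm h2 h1
      · simpa using h3
    ext i j
    have := congrFun (hz (Pi.single j 1)) i
    simpa [mulVec_single] using this
  have hne : S.Nonempty := by
    obtain ⟨y, hy1, _⟩ := hnorm x₀ hx₀
    exact ⟨quadForm A y, y, hy1, rfl⟩
  have hbdd : BddBelow S := by
    refine ⟨0, fun r hr => ?_⟩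
    obtain ⟨x, _, rfl⟩ := hr
    exact quad_nonneg hA.posSemidef x
  constructor
  · intro h
    refine le_csInf hne fun r hr => ?_
    obtain ⟨x, hx1, rfl⟩ := hr
    have h0 : 0 ≤ quadForm (A - (μ:ℂ) • B) x := quad_nonneg h x
    rw [quad_sub, hx1] at h0
    linarith
  · intro h
    refine PosSemidef.of_dotProduct_mulVec_nonneg (herm_sub hA.1 hB.1 μ) fun x => ?_
    rw [Complex.nonneg_iff]
    refine ⟨?_, (herm_im (herm_sub hA.1 hB.1 μ) x).symm⟩
    show (0:ℝ) ≤ quadForm (A - (μ:ℂ) • B) x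
    rw [quad_sub]
    rcases eq_or_lt_of_le (quad_nonneg hB x) with ht | ht
    · rw [← ht]
      simpa using quad_nonneg hA.posSemidef x
    · obtain ⟨y, hy1, hy2⟩ := hnorm x ht
      have h1 : muPlus A B ≤ quadForm A y := csInf_le hbdd ⟨y, hy1, rfl⟩
      nlinarith [le_trans h h1]
end

section
/- Let A and B be n×n Hermitian matrices and ε > 0. Denote by λ_k(M) the k-th eigenvalue (in decreasing order) of a Hermitian matrix M. Then Σ_k (λ_k(A − εB) − λ_k(A))² ≤ ε²‖B‖_F², where ‖·‖_F is the Frobenius norm. In particular, each eigenvalue λ_k(A − εB) converges to λ_k(A) as ε → 0. -/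
open Matrix ComplexOrder

/-- The eigenvalues of a Hermitian matrix listed in decreasing order:
`eigDesc hM 0` is the largest eigenvalue. -/
noncomputable def eigDesc {n : ℕ} {M : Matrix (Fin n) (Fin n) ℂ} (hM : M.IsHermitian) :
    Fin n → ℝ :=
  fun k => (hM.eigenvalues ∘ Tuple.sort hM.eigenvalues) k.rev

section AuxHW
open Finset


lemma frob_eq_trace {n : ℕ} (Y : Matrix (Fin n) (Fin n) ℂ) :
    ∑ i, ∑ j, ‖Y i j‖ ^ 2 = (Matrix.trace (Yᴴ * Y)).re := by
  simp only [Matrix.trace, Matrix.diag, Matrix.mul_apply, Matrix.conjTranspose_apply]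
  rw [Finset.sum_comm]
  rw [Complex.re_sum]
  refine Finset.sum_congr rfl fun j _ => ?_
  rw [Complex.re_sum]
  refine Finset.sum_congr rfl fun i _ => ?_
  rw [mul_comm, RCLike.star_def, Complex.mul_conj]
  simp [Complex.normSq_eq_norm_sq, ← Complex.ofReal_pow]

lemma frob_unitary_inv {n : ℕ} (E : Matrix (Fin n) (Fin n) ℂ)
    (U V : Matrix.unitaryGroup (Fin n) ℂ) :
    ∑ i, ∑ j, ‖((star (V : Matrix (Fin n) (Fin n) ℂ)) * E * (U : Matrix (Fin n) (Fin n) ℂ)) i j‖ ^ 2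
      = ∑ i, ∑ j, ‖E i j‖ ^ 2 := by
  rw [frob_eq_trace, frob_eq_trace]
  congr 1
  have h1 : ((star (V : Matrix (Fin n) (Fin n) ℂ)) * E * (U : Matrix (Fin n) (Fin n) ℂ))ᴴ
      = (star (U : Matrix (Fin n) (Fin n) ℂ)) * Eᴴ * (V : Matrix (Fin n) (Fin n) ℂ) := by
    simp [Matrix.conjTranspose_mul, Matrix.star_eq_conjTranspose, mul_assoc]
  rw [h1]
  have hV : (V : Matrix (Fin n) (Fin n) ℂ) * star (V : Matrix (Fin n) (Fin n) ℂ) = 1 :=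
    Matrix.mem_unitaryGroup_iff.mp V.2
  have hU : (U : Matrix (Fin n) (Fin n) ℂ) * star (U : Matrix (Fin n) (Fin n) ℂ) = 1 :=
    Matrix.mem_unitaryGroup_iff.mp U.2
  calc Matrix.trace ((star (U : Matrix (Fin n) (Fin n) ℂ)) * Eᴴ * (V : Matrix (Fin n) (Fin n) ℂ)
        * ((star (V : Matrix (Fin n) (Fin n) ℂ)) * E * (U : Matrix (Fin n) (Fin n) ℂ)))
      = Matrix.trace ((star (U : Matrix (Fin n) (Fin n) ℂ)) * (Eᴴ * E)
          * (U : Matrix (Fin n) (Fin n) ℂ)) := by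
        rw [show (star (U : Matrix (Fin n) (Fin n) ℂ)) * Eᴴ * (V : Matrix (Fin n) (Fin n) ℂ)
            * ((star (V : Matrix (Fin n) (Fin n) ℂ)) * E * (U : Matrix (Fin n) (Fin n) ℂ))
            = (star (U : Matrix (Fin n) (Fin n) ℂ)) * Eᴴ
              * ((V : Matrix (Fin n) (Fin n) ℂ) * (star (V : Matrix (Fin n) (Fin n) ℂ)))
              * E * (U : Matrix (Fin n) (Fin n) ℂ) by noncomm_ring]
        rw [hV, mul_one]
        noncomm_ring
    _ = Matrix.trace (Eᴴ * E) := by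
        rw [Matrix.trace_mul_cycle, ← mul_assoc, hU, one_mul]

lemma eigDesc_antitone {n : ℕ} {M : Matrix (Fin n) (Fin n) ℂ} (hM : M.IsHermitian) :
    Antitone (eigDesc hM) := fun a b hab =>
  Tuple.monotone_sort hM.eigenvalues (Fin.rev_le_rev.mpr hab)

lemma eigDesc_apply {n : ℕ} {M : Matrix (Fin n) (Fin n) ℂ} (hM : M.IsHermitian) (k : Fin n) :
    eigDesc hM k = hM.eigenvalues ((Fin.revPerm.trans (Tuple.sort hM.eigenvalues)) k) := rfl


lemma key_perm {n : ℕ} (f g : Fin n → ℝ) (hf : Antitone f) (hg : Antitone g)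
    (σ : Equiv.Perm (Fin n)) : ∑ k, f k * g (σ k) ≤ ∑ k, f k * g k := by
  simpa [smul_eq_mul] using (hf.monovary hg).sum_smul_comp_perm_le_sum_smul (σ := σ)

lemma key_ds {n : ℕ} (S : Matrix (Fin n) (Fin n) ℝ) (hS : S ∈ doublyStochastic ℝ (Fin n))
    (f g : Fin n → ℝ) (hf : Antitone f) (hg : Antitone g) :
    ∑ k, ∑ l, S k l * (f k * g l) ≤ ∑ k, f k * g k := by
  obtain ⟨w, hw0, hw1, hwS⟩ := exists_eq_sum_perm_of_mem_doublyStochastic hS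
  have h1 : ∀ k l, S k l = ∑ σ : Equiv.Perm (Fin n), w σ * (if l = σ k then 1 else 0) := by
    intro k l
    rw [← hwS]
    simp [Matrix.sum_apply, Matrix.smul_apply, Equiv.Perm.permMatrix,
      PEquiv.toMatrix_apply, Equiv.toPEquiv_apply, Option.mem_def]
    exact Finset.sum_congr rfl fun σ _ => by simp only [eq_comm]
  have h2 : ∀ k, ∑ l, S k l * (f k * g l) = ∑ σ : Equiv.Perm (Fin n), w σ * (f k * g (σ k)) := by
    intro k
    simp only [h1, Finset.sum_mul]
    rw [Finset.sum_comm]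
    refine Finset.sum_congr rfl fun σ _ => ?_
    simp [mul_ite, ite_mul, Finset.sum_ite_eq', mul_comm, mul_left_comm]
  calc ∑ k, ∑ l, S k l * (f k * g l)
      = ∑ σ : Equiv.Perm (Fin n), w σ * ∑ k, f k * g (σ k) := by
        simp only [h2]
        rw [Finset.sum_comm]
        simp [Finset.mul_sum]
    _ ≤ ∑ σ : Equiv.Perm (Fin n), w σ * ∑ k, f k * g k :=
        Finset.sum_le_sum fun σ _ =>
          mul_le_mul_of_nonneg_left (key_perm f g hf hg σ) (hw0 σ)
    _ = ∑ k, f k * g k := by rw [← Finset.sum_mul, hw1, one_mul]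


lemma key_main {n : ℕ} (S : Matrix (Fin n) (Fin n) ℝ) (hS : S ∈ doublyStochastic ℝ (Fin n))
    (f g : Fin n → ℝ) (hf : Antitone f) (hg : Antitone g)
    (hds : ∑ k, ∑ l, S k l * (f k * g l) ≤ ∑ k, f k * g k) :
    ∑ k, (f k - g k) ^ 2 ≤ ∑ k, ∑ l, S k l * (f k - g l) ^ 2 := by
  have hrow : ∀ k, ∑ l, S k l = 1 := sum_row_of_mem_doublyStochastic hS
  have hcol : ∀ l, ∑ k, S k l = 1 := sum_col_of_mem_doublyStochastic hS
  have e1 : ∑ k, (f k - g k) ^ 2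
      = ∑ k, (f k) ^ 2 + ∑ k, (g k) ^ 2 - 2 * ∑ k, f k * g k := by
    rw [Finset.mul_sum, ← Finset.sum_add_distrib, ← Finset.sum_sub_distrib]
    exact Finset.sum_congr rfl fun k _ => by ring
  have e2 : ∑ k, ∑ l, S k l * (f k - g l) ^ 2
      = ∑ k, (f k) ^ 2 + ∑ l, (g l) ^ 2 - 2 * ∑ k, ∑ l, S k l * (f k * g l) := by
    have t1 : ∑ k, ∑ l, S k l * (f k) ^ 2 = ∑ k, (f k) ^ 2 := by
      refine Finset.sum_congr rfl fun k _ => ?_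
      rw [← Finset.sum_mul, hrow k, one_mul]
    have t2 : ∑ k, ∑ l, S k l * (g l) ^ 2 = ∑ l, (g l) ^ 2 := by
      rw [Finset.sum_comm]
      refine Finset.sum_congr rfl fun l _ => ?_
      rw [← Finset.sum_mul, hcol l, one_mul]
    calc ∑ k, ∑ l, S k l * (f k - g l) ^ 2
        = ∑ k, ∑ l, (S k l * (f k) ^ 2 + S k l * (g l) ^ 2
            - 2 * (S k l * (f k * g l))) := by
          exact Finset.sum_congr rfl fun k _ => Finset.sum_congr rfl fun l _ => by ring
      _ = ∑ k, (f k) ^ 2 + ∑ l, (g l) ^ 2 - 2 * ∑ k, ∑ l, S k l * (f k * g l) := by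
          simp only [Finset.sum_sub_distrib, Finset.sum_add_distrib, ← Finset.mul_sum]
          rw [t1, t2]
    
  rw [e1, e2]
  linarith

lemma hw_core {n : ℕ} {M N : Matrix (Fin n) (Fin n) ℂ} (hM : M.IsHermitian)
    (hN : N.IsHermitian) :
    ∑ k, (eigDesc hN k - eigDesc hM k) ^ 2 ≤ ∑ i, ∑ j, ‖(N - M) i j‖ ^ 2 := by
  set U : Matrix (Fin n) (Fin n) ℂ := (hM.eigenvectorUnitary : Matrix (Fin n) (Fin n) ℂ) with hU
  set V : Matrix (Fin n) (Fin n) ℂ := (hN.eigenvectorUnitary : Matrix (Fin n) (Fin n) ℂ) with hV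
  have hUU : U * star U = 1 := Matrix.mem_unitaryGroup_iff.mp hM.eigenvectorUnitary.2
  have hUU' : star U * U = 1 := Matrix.mem_unitaryGroup_iff'.mp hM.eigenvectorUnitary.2
  have hVV : V * star V = 1 := Matrix.mem_unitaryGroup_iff.mp hN.eigenvectorUnitary.2
  have hVV' : star V * V = 1 := Matrix.mem_unitaryGroup_iff'.mp hN.eigenvectorUnitary.2
  set lam := hM.eigenvalues with hlam
  set mu := hN.eigenvalues with hmu
  set W : Matrix (Fin n) (Fin n) ℂ := star V * U with hW
  -- W is unitary
  have hWW : W * star W = 1 := by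
    rw [hW, StarMul.star_mul, star_star, mul_assoc, ← mul_assoc U, hUU, one_mul, hVV']
  have hWW' : star W * W = 1 := by
    rw [hW, StarMul.star_mul, star_star, mul_assoc, ← mul_assoc V, hVV, one_mul, hUU']
  -- entrywise formula for X
  have hVN : star V * N = Matrix.diagonal (RCLike.ofReal ∘ mu) * star V := by
    have h : star V * N * V = Matrix.diagonal (RCLike.ofReal ∘ hN.eigenvalues) := by
      have h0 := hN.conjStarAlgAut_star_eigenvectorUnitary
      rw [Unitary.conjStarAlgAut_apply, Unitary.coe_star, star_star] at h0
      exact h0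
    calc star V * N = star V * N * (V * star V) := by rw [hVV, mul_one]
      _ = (star V * N * V) * star V := by noncomm_ring
      _ = Matrix.diagonal (RCLike.ofReal ∘ mu) * star V := by rw [h]
  have hMU : M * U = U * Matrix.diagonal (RCLike.ofReal ∘ lam) := by
    have h : star U * M * U = Matrix.diagonal (RCLike.ofReal ∘ hM.eigenvalues) := by
      have h0 := hM.conjStarAlgAut_star_eigenvectorUnitary
      rw [Unitary.conjStarAlgAut_apply, Unitary.coe_star, star_star] at h0
      exact h0
    calc M * U = (U * star U) * M * U := by rw [hUU, one_mul]
      _ = U * (star U * M * U) := by noncomm_ring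
      _ = U * Matrix.diagonal (RCLike.ofReal ∘ lam) := by rw [h]
  have hXmat : star V * (N - M) * U
      = Matrix.diagonal (RCLike.ofReal ∘ mu) * W - W * Matrix.diagonal (RCLike.ofReal ∘ lam) := by
    rw [mul_sub, sub_mul, hW]
    refine congrArg₂ (· - ·) ?_ ?_
    · rw [hVN, mul_assoc]
    · rw [mul_assoc, hMU, ← mul_assoc]
  have hX : ∀ i j, (star V * (N - M) * U) i j = (((mu i - lam j : ℝ)) : ℂ) * W i j := by
    intro i j
    rw [hXmat]
    simp only [Matrix.sub_apply, Matrix.diagonal_mul, Matrix.mul_diagonal, Function.comp_apply,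
      RCLike.ofReal_real_eq_id, id_eq]
    have hco : ∀ r : ℝ, (RCLike.ofReal r : ℂ) = (r : ℂ) := fun r => rfl
    rw [hco, hco, Complex.ofReal_sub, sub_mul]
    ring
  -- the doubly stochastic matrix
  set S : Matrix (Fin n) (Fin n) ℝ := Matrix.of fun i j => ‖W i j‖ ^ 2 with hS
  have hSrow : ∀ i, ∑ j, S i j = 1 := by
    intro i
    have h1 : (W * Wᴴ) i i = ∑ j, ((‖W i j‖ ^ 2 : ℝ) : ℂ) := by
      simp only [Matrix.mul_apply, Matrix.conjTranspose_apply]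
      refine Finset.sum_congr rfl fun j _ => ?_
      rw [RCLike.star_def, Complex.mul_conj]
      simp [Complex.normSq_eq_norm_sq, ← Complex.ofReal_pow]
    have h2 : (W * Wᴴ) i i = 1 := by
      rw [show Wᴴ = star W from rfl, hWW]; simp
    have := h1.symm.trans h2
    rw [← Complex.ofReal_sum] at this
    exact_mod_cast this
  have hScol : ∀ j, ∑ i, S i j = 1 := by
    intro j
    have h1 : (Wᴴ * W) j j = ∑ i, ((‖W i j‖ ^ 2 : ℝ) : ℂ) := by
      simp only [Matrix.mul_apply, Matrix.conjTranspose_apply]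
      refine Finset.sum_congr rfl fun i _ => ?_
      rw [RCLike.star_def, mul_comm, Complex.mul_conj]
      simp [Complex.normSq_eq_norm_sq, ← Complex.ofReal_pow]
    have h2 : (Wᴴ * W) j j = 1 := by
      rw [show Wᴴ = star W from rfl, hWW']; simp
    have := h1.symm.trans h2
    rw [← Complex.ofReal_sum] at this
    exact_mod_cast this
  have hSnn : ∀ i j, 0 ≤ S i j := fun i j => by simp only [hS, Matrix.of_apply]; positivity
  -- the central identity
  have hfrob : ∑ i, ∑ j, S i j * (mu i - lam j) ^ 2 = ∑ i, ∑ j, ‖(N - M) i j‖ ^ 2 := by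
    rw [← frob_unitary_inv (N - M) hM.eigenvectorUnitary hN.eigenvectorUnitary]
    refine Finset.sum_congr rfl fun i _ => Finset.sum_congr rfl fun j _ => ?_
    rw [show ((star (hN.eigenvectorUnitary : Matrix (Fin n) (Fin n) ℂ)) * (N - M)
      * (hM.eigenvectorUnitary : Matrix (Fin n) (Fin n) ℂ)) i j = (star V * (N - M) * U) i j
      from rfl, hX i j]
    rw [norm_mul, mul_pow, Complex.norm_real]
    simp [hS, sq_abs, mul_comm]
  set piM : Equiv.Perm (Fin n) := Fin.revPerm.trans (Tuple.sort lam) with hpiM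
  set piN : Equiv.Perm (Fin n) := Fin.revPerm.trans (Tuple.sort mu) with hpiN
  have hdM : ∀ k, eigDesc hM k = lam (piM k) := fun k => rfl
  have hdN : ∀ k, eigDesc hN k = mu (piN k) := fun k => rfl
  set S' : Matrix (Fin n) (Fin n) ℝ := Matrix.of fun k l => S (piN k) (piM l) with hS'
  have hS'mem : S' ∈ doublyStochastic ℝ (Fin n) := by
    rw [mem_doublyStochastic_iff_sum]
    refine ⟨fun i j => hSnn _ _, fun i => ?_, fun j => ?_⟩
    · simp only [hS', Matrix.of_apply]
      exact (Equiv.sum_comp piM fun j => S (piN i) j).trans (hSrow (piN i))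
    · simp only [hS', Matrix.of_apply]
      exact (Equiv.sum_comp piN fun i => S i (piM j)).trans (hScol (piM j))
  have hre : ∑ k, ∑ l, S' k l * (eigDesc hN k - eigDesc hM l) ^ 2
      = ∑ i, ∑ j, S i j * (mu i - lam j) ^ 2 := by
    rw [← Equiv.sum_comp piN (fun i => ∑ j, S i j * (mu i - lam j) ^ 2)]
    refine Finset.sum_congr rfl fun k _ => ?_
    rw [← Equiv.sum_comp piM (fun j => S (piN k) j * (mu (piN k) - lam j) ^ 2)]
    refine Finset.sum_congr rfl fun l _ => ?_
    rw [hdM, hdN, hS']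
    rfl
  calc ∑ k, (eigDesc hN k - eigDesc hM k) ^ 2
      ≤ ∑ k, ∑ l, S' k l * (eigDesc hN k - eigDesc hM l) ^ 2 :=
        key_main S' hS'mem _ _ (eigDesc_antitone hN) (eigDesc_antitone hM)
          (key_ds S' hS'mem _ _ (eigDesc_antitone hN) (eigDesc_antitone hM))
    _ = ∑ i, ∑ j, ‖(N - M) i j‖ ^ 2 := by rw [hre, hfrob]


end AuxHW

theorem stmt7 {n : ℕ} (A B : Matrix (Fin n) (Fin n) ℂ)
    (hA : A.IsHermitian) (hB : B.IsHermitian)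
    (hfam : ∀ ε : ℝ, (A - (ε : ℂ) • B).IsHermitian) :
    (∀ ε : ℝ, 0 < ε →
      ∑ k, (eigDesc (hfam ε) k - eigDesc hA k) ^ 2 ≤ ε ^ 2 * ∑ i, ∑ j, ‖B i j‖ ^ 2) ∧
    (∀ k, Filter.Tendsto (fun ε : ℝ => eigDesc (hfam ε) k) (nhds 0) (nhds (eigDesc hA k))) := by
  have key : ∀ ε : ℝ, ∑ k, (eigDesc (hfam ε) k - eigDesc hA k) ^ 2
      ≤ ε ^ 2 * ∑ i, ∑ j, ‖B i j‖ ^ 2 := by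
    intro ε
    have h := hw_core hA (hfam ε)
    have he : ∀ i j, ‖(A - (ε : ℂ) • B - A) i j‖ ^ 2 = ε ^ 2 * ‖B i j‖ ^ 2 := by
      intro i j
      have h2 : (A - (ε : ℂ) • B - A) i j = -((ε : ℂ) * B i j) := by
        simp [Matrix.sub_apply, Matrix.smul_apply, smul_eq_mul]
      rw [h2, norm_neg, norm_mul, mul_pow, Complex.norm_real, Real.norm_eq_abs, sq_abs]
    calc ∑ k, (eigDesc (hfam ε) k - eigDesc hA k) ^ 2
        ≤ ∑ i, ∑ j, ‖(A - (ε : ℂ) • B - A) i j‖ ^ 2 := h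
      _ = ε ^ 2 * ∑ i, ∑ j, ‖B i j‖ ^ 2 := by
          simp only [he, ← Finset.mul_sum]
  refine ⟨fun ε _ => key ε, fun k => ?_⟩
  set C := ∑ i, ∑ j, ‖B i j‖ ^ 2 with hC
  have hone : ∀ ε : ℝ, |eigDesc (hfam ε) k - eigDesc hA k| ≤ |ε| * Real.sqrt C := by
    intro ε
    have h1 : (eigDesc (hfam ε) k - eigDesc hA k) ^ 2 ≤ ε ^ 2 * C :=
      le_trans (Finset.single_le_sum
        (f := fun k => (eigDesc (hfam ε) k - eigDesc hA k) ^ 2)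
        (fun i _ => sq_nonneg _) (Finset.mem_univ k)) (key ε)
    calc |eigDesc (hfam ε) k - eigDesc hA k|
        = Real.sqrt ((eigDesc (hfam ε) k - eigDesc hA k) ^ 2) := (Real.sqrt_sq_eq_abs _).symm
      _ ≤ Real.sqrt (ε ^ 2 * C) := Real.sqrt_le_sqrt h1
      _ = |ε| * Real.sqrt C := by rw [Real.sqrt_mul (sq_nonneg ε), Real.sqrt_sq_eq_abs]
  have hg : Filter.Tendsto (fun ε : ℝ => |ε| * Real.sqrt C) (nhds 0) (nhds 0) := by
    have h3 : Filter.Tendsto (fun ε : ℝ => |ε| * Real.sqrt C) (nhds 0)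
        (nhds (|(0 : ℝ)| * Real.sqrt C)) := (continuous_abs.mul continuous_const).tendsto 0
    simpa using h3
  have hd : Filter.Tendsto (fun ε : ℝ => eigDesc (hfam ε) k - eigDesc hA k)
      (nhds 0) (nhds 0) :=
    squeeze_zero_norm (fun ε => by simpa [Real.norm_eq_abs] using hone ε) hg
  have h4 := hd.add_const (eigDesc hA k)
  simpa using h4
end

section
/- Let G be an entrywise nonnegative n×n real matrix and Γ a diagonal matrix with positive diagonal entries. The system (I − ΓG)p ≥ η has a solution p ≥ 0 for every vector η ≥ 0 if and only if the spectral radius of ΓG is strictly less than 1. -/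
open Matrix Filter Topology Finset
open scoped ENNReal NNReal

attribute [local instance] Matrix.linftyOpNormedRing Matrix.linftyOpNormedAlgebra

/-- The spectral radius of a real square matrix: the supremum of the moduli of its
complex eigenvalues. -/
noncomputable def specRad {n : ℕ} (M : Matrix (Fin n) (Fin n) ℝ) : ℝ :=
  sSup {r : ℝ | ∃ μ : ℂ, μ ∈ spectrum ℂ (M.map (algebraMap ℝ ℂ)) ∧ r = ‖μ‖}

lemma spec_eigen {n : ℕ} {M : Matrix (Fin n) (Fin n) ℂ} {μ : ℂ}
    (h : μ ∈ spectrum ℂ M) : ∃ x : Fin n → ℂ, x ≠ 0 ∧ M.mulVec x = μ • x := by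
  rw [spectrum.mem_iff] at h
  rw [Matrix.isUnit_iff_isUnit_det, isUnit_iff_ne_zero, not_not] at h
  obtain ⟨v, hv, hv0⟩ := (Matrix.exists_mulVec_eq_zero_iff).2 h
  refine ⟨v, hv, ?_⟩
  rw [Algebra.algebraMap_eq_smul_one, Matrix.sub_mulVec, Matrix.smul_mulVec,
    Matrix.one_mulVec, sub_eq_zero] at hv0
  exact hv0.symm

lemma entry_le_norm {n : ℕ} (M : Matrix (Fin n) (Fin n) ℂ) (i j : Fin n) :
    ‖M i j‖ ≤ ‖M‖ := by
  rw [Matrix.linfty_opNorm_def]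
  have h1 : ‖M i j‖₊ ≤ ∑ k, ‖M i k‖₊ :=
    Finset.single_le_sum (f := fun k => ‖M i k‖₊) (fun _ _ => by positivity) (Finset.mem_univ j)
  have h2 : (∑ k, ‖M i k‖₊) ≤ (Finset.univ : Finset (Fin n)).sup fun i => ∑ j, ‖M i j‖₊ :=
    Finset.le_sup (f := fun i => ∑ j, ‖M i j‖₊) (Finset.mem_univ i)
  exact_mod_cast h1.trans h2

lemma pow_entry_nonneg {n : ℕ} {A : Matrix (Fin n) (Fin n) ℝ} (hA : ∀ i j, 0 ≤ A i j) :
    ∀ m i j, 0 ≤ (A ^ m) i j := by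
  intro m
  induction m with
  | zero =>
    intro i j
    rw [pow_zero]
    by_cases h : i = j <;> simp [Matrix.one_apply, h]
  | succ m ih =>
    intro i j
    rw [pow_succ, Matrix.mul_apply]
    exact Finset.sum_nonneg fun k _ => mul_nonneg (ih i k) (hA k j)

lemma eig_bound {n : ℕ} (A : Matrix (Fin n) (Fin n) ℝ) (hA : ∀ i j, 0 ≤ A i j)
    (p : Fin n → ℝ) (hp1 : ∀ i, 1 ≤ p i) (hAp : ∀ i, (A.mulVec p) i ≤ p i - 1)
    {μ : ℂ} (hμ : μ ∈ spectrum ℂ (A.map (algebraMap ℝ ℂ))) :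
    ∃ i, ‖μ‖ ≤ (p i - 1) / p i := by
  have hppos : ∀ i, 0 < p i := fun i => lt_of_lt_of_le one_pos (hp1 i)
  obtain ⟨x, hx, hxe⟩ := spec_eigen hμ
  obtain ⟨j₁, hj₁⟩ := Function.ne_iff.mp hx
  haveI : Nonempty (Fin n) := ⟨j₁⟩
  obtain ⟨i₀, -, hmax⟩ :=
    Finset.exists_max_image (Finset.univ : Finset (Fin n)) (fun i => ‖x i‖ / p i)
      Finset.univ_nonempty
  set t : ℝ := ‖x i₀‖ / p i₀ with ht
  have ht_pos : 0 < t := by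
    have h1 : 0 < ‖x j₁‖ / p j₁ := by
      apply div_pos _ (hppos j₁)
      simpa [norm_pos_iff] using hj₁
    exact lt_of_lt_of_le h1 (hmax j₁ (Finset.mem_univ j₁))
  have hxle : ∀ j, ‖x j‖ ≤ t * p j := fun j => by
    have := hmax j (Finset.mem_univ j)
    rw [div_le_iff₀ (hppos j)] at this
    linarith
  have hxi₀ : ‖x i₀‖ = t * p i₀ := by
    rw [ht, div_mul_cancel₀ _ (ne_of_gt (hppos i₀))]
  have key : ‖μ‖ * (t * p i₀) ≤ t * (p i₀ - 1) := by
    have h1 : μ * x i₀ = ((A.map (algebraMap ℝ ℂ)).mulVec x) i₀ := by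
      rw [hxe]; simp
    calc ‖μ‖ * (t * p i₀) = ‖μ * x i₀‖ := by rw [norm_mul, hxi₀]
      _ = ‖∑ j, (algebraMap ℝ ℂ) (A i₀ j) * x j‖ := by
          rw [h1]; simp [Matrix.mulVec, dotProduct, Matrix.map_apply]
      _ ≤ ∑ j, ‖(algebraMap ℝ ℂ) (A i₀ j) * x j‖ := norm_sum_le _ _
      _ = ∑ j, A i₀ j * ‖x j‖ := by
          refine Finset.sum_congr rfl fun j _ => ?_
          rw [norm_mul]
          norm_num [abs_of_nonneg (hA i₀ j)]
      _ ≤ ∑ j, A i₀ j * (t * p j) :=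
          Finset.sum_le_sum fun j _ => mul_le_mul_of_nonneg_left (hxle j) (hA i₀ j)
      _ = t * (A.mulVec p) i₀ := by
          rw [Matrix.mulVec, dotProduct, Finset.mul_sum]
          exact Finset.sum_congr rfl fun j _ => by ring
      _ ≤ t * (p i₀ - 1) := mul_le_mul_of_nonneg_left (hAp i₀) (le_of_lt ht_pos)
  refine ⟨i₀, ?_⟩
  rw [le_div_iff₀ (hppos i₀)]
  have := (mul_le_mul_iff_right₀ ht_pos).mp (by linarith [key] : t * (‖μ‖ * p i₀) ≤ t * (p i₀ - 1))
  linarith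

lemma mulVec_sum_nonneg {n : ℕ} {M : Matrix (Fin n) (Fin n) ℝ} (hM : ∀ i j, 0 ≤ M i j)
    {v : Fin n → ℝ} (hv : ∀ i, 0 ≤ v i) (i : Fin n) : 0 ≤ (M.mulVec v) i := by
  simp only [Matrix.mulVec, dotProduct]
  exact Finset.sum_nonneg fun j _ => mul_nonneg (hM i j) (hv j)

lemma backward {n : ℕ} (A : Matrix (Fin n) (Fin n) ℝ) (hA : ∀ i j, 0 ≤ A i j)
    (hρ : specRad A < 1) (η : Fin n → ℝ) (hη : ∀ i, 0 ≤ η i) :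
    ∃ p : Fin n → ℝ, (∀ i, 0 ≤ p i) ∧ ∀ i, η i ≤ ((1 - A).mulVec p) i := by
  classical
  set f := algebraMap ℝ ℂ
  set B : Matrix (Fin n) (Fin n) ℂ := A.map f with hB
  have hBpow : ∀ m : ℕ, B ^ m = (A ^ m).map f := by
    intro m
    induction m with
    | zero => simp [Matrix.map_one f f.map_zero f.map_one]
    | succ m ih => rw [pow_succ, pow_succ, ih, hB, Matrix.map_mul]
  have hfin : ({r : ℝ | ∃ μ : ℂ, μ ∈ spectrum ℂ B ∧ r = ‖μ‖}).Finite := by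
    have : {r : ℝ | ∃ μ : ℂ, μ ∈ spectrum ℂ B ∧ r = ‖μ‖} =
        (fun μ : ℂ => ‖μ‖) '' (spectrum ℂ B) := by
      ext r; simp [Set.mem_image, eq_comm]
    rw [this]
    exact (Matrix.finite_spectrum B).image _
  have hbound : ∀ μ ∈ spectrum ℂ B, ‖μ‖ ≤ specRad A := fun μ hμ =>
    le_csSup hfin.bddAbove ⟨μ, hμ, rfl⟩
  -- 1 - B is a unit
  have hUnit : IsUnit (1 - B) := by
    by_contra hc
    have h1 : (1 : ℂ) ∈ spectrum ℂ B := by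
      rw [spectrum.mem_iff, _root_.map_one]
      exact hc
    have := hbound 1 h1
    rw [norm_one] at this
    linarith
  have hdet : IsUnit ((1 - A).det) := by
    have hmap : (1 : Matrix (Fin n) (Fin n) ℂ) - B = f.mapMatrix (1 - A) := by
      rw [map_sub, _root_.map_one]; rfl
    have h1 : IsUnit ((1 - B).det) := (Matrix.isUnit_iff_isUnit_det _).mp hUnit
    rw [hmap] at h1
    have h2 : (f.mapMatrix (1 - A)).det = f ((1 - A).det) := by
      rw [RingHom.mapMatrix_apply]
      exact (f.map_det (1 - A)).symm
    rw [h2, isUnit_iff_ne_zero] at h1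
    rw [isUnit_iff_ne_zero]
    intro h0
    exact h1 (by rw [h0, map_zero])
  set Q : Matrix (Fin n) (Fin n) ℝ := (1 - A)⁻¹ with hQ
  have hQ1 : (1 - A) * Q = 1 := Matrix.mul_nonsing_inv _ hdet
  have hQ2 : Q * (1 - A) = 1 := Matrix.nonsing_inv_mul _ hdet
  -- spectral radius (ENNReal) < 1
  have hρB : spectralRadius ℂ B < 1 := by
    have hle : spectralRadius ℂ B ≤ ENNReal.ofReal (max (specRad A) 0) := by
      refine iSup₂_le fun μ hμ => ?_
      rw [← ENNReal.ofReal_coe_nnreal, coe_nnnorm]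
      exact ENNReal.ofReal_le_ofReal ((hbound μ hμ).trans (le_max_left _ _))
    refine lt_of_le_of_lt hle ?_
    rw [ENNReal.ofReal_lt_one]
    exact max_lt hρ one_pos
  haveI : CompleteSpace (Matrix (Fin n) (Fin n) ℂ) := FiniteDimensional.complete ℂ _
  have htend := spectrum.pow_nnnorm_pow_one_div_tendsto_nhds_spectralRadius B
  obtain ⟨r, hr1, hr2⟩ := ENNReal.lt_iff_exists_nnreal_btwn.mp hρB
  have hev : ∀ᶠ m : ℕ in atTop, (‖B ^ m‖₊ : ℝ≥0∞) ^ (1 / (m : ℝ)) < r :=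
    htend.eventually_lt_const hr1
  have hrlt1 : (r : ℝ) < 1 := by exact_mod_cast hr2
  have hbnd : ∀ᶠ m : ℕ in atTop, ‖B ^ m‖ ≤ (r : ℝ) ^ m := by
    filter_upwards [hev, eventually_ge_atTop 1] with m hm hm1
    have hm0 : (m : ℝ) ≠ 0 := by positivity
    have h1 : ((‖B ^ m‖₊ : ℝ≥0∞) ^ (1 / (m : ℝ))) ^ (m : ℝ) ≤ (r : ℝ≥0∞) ^ (m : ℝ) :=
      ENNReal.rpow_le_rpow hm.le (by positivity)
    rw [← ENNReal.rpow_mul, one_div_mul_cancel hm0, ENNReal.rpow_one] at h1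
    have h2 : (r : ℝ≥0∞) ^ (m : ℝ) = ((r ^ m : ℝ≥0) : ℝ≥0∞) := by
      rw [ENNReal.rpow_natCast, ← ENNReal.coe_pow]
    rw [h2, ENNReal.coe_le_coe] at h1
    calc ‖B ^ m‖ = ((‖B ^ m‖₊ : ℝ≥0) : ℝ) := rfl
      _ ≤ ((r ^ m : ℝ≥0) : ℝ) := by exact_mod_cast h1
      _ = (r : ℝ) ^ m := by push_cast; ring
  have hnorm0 : Tendsto (fun m : ℕ => ‖B ^ m‖) atTop (𝓝 0) := by
    refine squeeze_zero' (Eventually.of_forall fun m => norm_nonneg _) hbnd ?_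
    exact tendsto_pow_atTop_nhds_zero_of_lt_one r.2 hrlt1
  have hentry : ∀ i j : Fin n, Tendsto (fun m : ℕ => (A ^ m) i j) atTop (𝓝 0) := by
    intro i j
    refine squeeze_zero_norm' ?_ hnorm0
    filter_upwards with m
    have h1 : ‖(A ^ m) i j‖ = ‖(B ^ m) i j‖ := by
      rw [hBpow]
      simp [Matrix.map_apply, f, Complex.norm_real]
    rw [h1]
    exact entry_le_norm _ i j
  have hg : ∀ j : Fin n, Tendsto (fun m : ℕ => ((A ^ m).mulVec η) j) atTop (𝓝 0) := by
    intro j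
    have : Tendsto (fun m : ℕ => ∑ k, (A ^ m) j k * η k) atTop (𝓝 (∑ k : Fin n, 0)) := by
      exact tendsto_finset_sum _ fun k _ => by
        simpa using (hentry j k).mul_const (η k)
    simpa [Matrix.mulVec, dotProduct] using this
  set p : Fin n → ℝ := Q.mulVec η with hp
  have hgeom : ∀ m : ℕ, (∑ k ∈ Finset.range m, A ^ k) = Q - Q * A ^ m := by
    intro m
    have h1 : (1 - A) * ∑ k ∈ Finset.range m, A ^ k = 1 - A ^ m := by
      have := mul_geom_sum A m
      have h2 : (1 - A) * ∑ k ∈ Finset.range m, A ^ k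
          = -((A - 1) * ∑ k ∈ Finset.range m, A ^ k) := by rw [← neg_mul, neg_sub]
      rw [h2, this, neg_sub]
    calc (∑ k ∈ Finset.range m, A ^ k)
        = (Q * (1 - A)) * ∑ k ∈ Finset.range m, A ^ k := by rw [hQ2, one_mul]
      _ = Q * ((1 - A) * ∑ k ∈ Finset.range m, A ^ k) := by rw [mul_assoc]
      _ = Q * (1 - A ^ m) := by rw [h1]
      _ = Q - Q * A ^ m := by rw [mul_sub, mul_one]
  have hpart : ∀ m : ℕ, ∀ i, ((∑ k ∈ Finset.range m, A ^ k).mulVec η) i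
      = p i - (Q.mulVec ((A ^ m).mulVec η)) i := by
    intro m i
    rw [hgeom m, Matrix.sub_mulVec, Matrix.mulVec_mulVec]
    simp [hp, Matrix.mulVec_mulVec]
  have hcorr : ∀ i, Tendsto (fun m : ℕ => (Q.mulVec ((A ^ m).mulVec η)) i) atTop (𝓝 0) := by
    intro i
    have : Tendsto (fun m : ℕ => ∑ j, Q i j * ((A ^ m).mulVec η) j) atTop
        (𝓝 (∑ j : Fin n, 0)) :=
      tendsto_finset_sum _ fun j _ => by simpa using (hg j).const_mul (Q i j)
    simpa [Matrix.mulVec, dotProduct] using this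
  have htendp : ∀ i, Tendsto (fun m : ℕ => ((∑ k ∈ Finset.range m, A ^ k).mulVec η) i)
      atTop (𝓝 (p i)) := by
    intro i
    have h1 : Tendsto (fun m : ℕ => p i - (Q.mulVec ((A ^ m).mulVec η)) i) atTop
        (𝓝 (p i - 0)) := tendsto_const_nhds.sub (hcorr i)
    rw [sub_zero] at h1
    exact h1.congr fun m => (hpart m i).symm
  have hnonneg : ∀ m : ℕ, ∀ i, 0 ≤ ((∑ k ∈ Finset.range m, A ^ k).mulVec η) i := by
    intro m i
    apply mulVec_sum_nonneg _ hη
    intro a b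
    rw [Matrix.sum_apply]
    exact Finset.sum_nonneg fun k _ => pow_entry_nonneg hA k a b
  have hpnn : ∀ i, 0 ≤ p i := fun i => ge_of_tendsto' (htendp i) fun m => hnonneg m i
  refine ⟨p, hpnn, fun i => ?_⟩
  have : (1 - A).mulVec p = η := by
    rw [hp, Matrix.mulVec_mulVec, hQ1, Matrix.one_mulVec]
  rw [this]

theorem stmt11 {n : ℕ} (G : Matrix (Fin n) (Fin n) ℝ) (γ : Fin n → ℝ)
    (hG : ∀ i j, 0 ≤ G i j) (hγ : ∀ i, 0 < γ i) :
    (∀ η : Fin n → ℝ, (∀ i, 0 ≤ η i) →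
        ∃ p : Fin n → ℝ, (∀ i, 0 ≤ p i) ∧
          ∀ i, η i ≤ ((1 - Matrix.diagonal γ * G).mulVec p) i) ↔
      specRad (Matrix.diagonal γ * G) < 1 := by
  classical
  set A := Matrix.diagonal γ * G with hAdef
  have hA : ∀ i j, 0 ≤ A i j := fun i j => by
    rw [hAdef, Matrix.diagonal_mul]
    exact mul_nonneg (hγ i).le (hG i j)
  constructor
  · intro h
    obtain ⟨p, hp0, hineq⟩ := h (fun _ => 1) (fun _ => zero_le_one)
    have hineq' : ∀ i, (A.mulVec p) i ≤ p i - 1 := by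
      intro i
      have h1 := hineq i
      rw [Matrix.sub_mulVec, Matrix.one_mulVec] at h1
      simp only [Pi.sub_apply] at h1
      linarith
    have hp1 : ∀ i, 1 ≤ p i := fun i => by
      have h0 := mulVec_sum_nonneg hA hp0 i
      linarith [hineq' i]
    rcases Nat.eq_zero_or_pos n with hn | hn
    · subst hn
      haveI : Subsingleton (Matrix (Fin 0) (Fin 0) ℂ) :=
        ⟨fun a b => by ext i j; exact i.elim0⟩
      have hempty : {r : ℝ | ∃ μ : ℂ,
          μ ∈ spectrum ℂ (A.map (algebraMap ℝ ℂ)) ∧ r = ‖μ‖} = ∅ := by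
        ext r
        simp only [Set.mem_setOf_eq, Set.mem_empty_iff_false, iff_false, not_exists]
        rintro μ ⟨hμ, -⟩
        rw [spectrum.mem_iff] at hμ
        exact hμ (isUnit_of_subsingleton _)
      rw [specRad, hempty, Real.sSup_empty]
      norm_num
    · haveI : Nonempty (Fin n) := ⟨⟨0, hn⟩⟩
      rw [specRad]
      set C := Finset.univ.sup' Finset.univ_nonempty (fun i => (p i - 1) / p i) with hC
      have hC1 : C < 1 := by
        rw [Finset.sup'_lt_iff]
        intro i _
        rw [div_lt_one (by linarith [hp1 i])]
        linarith
      have hC0 : 0 ≤ C := by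
        refine le_trans ?_
          (Finset.le_sup' (fun i => (p i - 1) / p i) (Finset.mem_univ (⟨0, hn⟩ : Fin n)))
        have := hp1 ⟨0, hn⟩
        apply div_nonneg <;> linarith
      refine lt_of_le_of_lt (Real.sSup_le ?_ hC0) hC1
      rintro r ⟨μ, hμ, rfl⟩
      obtain ⟨i, hi⟩ := eig_bound A hA p hp1 hineq' hμ
      exact hi.trans (Finset.le_sup' (fun i => (p i - 1) / p i) (Finset.mem_univ i))
  · intro h η hη
    exact backward A hA h η hη
end

section
/- Let J : ℝ_{≥0}^n → ℝ_{≥0}^n be a standard function: (positivity) J(λ) ≥ 0 for λ ≥ 0; (monotonicity) λ ≥ λ' implies J(λ) ≥ J(λ'); (scalability) αJ(λ) > J(αλ) componentwise for all α > 1. Then J has at most one fixed point in ℝ_{≥0}^n. -/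
theorem stmt12 {n : ℕ} (J : (Fin n → ℝ) → (Fin n → ℝ))
    (hpos : ∀ l : Fin n → ℝ, (∀ i, 0 ≤ l i) → ∀ i, 0 ≤ J l i)
    (hmono : ∀ l l' : Fin n → ℝ, (∀ i, 0 ≤ l' i) → (∀ i, l' i ≤ l i) →
      ∀ i, J l' i ≤ J l i)
    (hscal : ∀ l : Fin n → ℝ, (∀ i, 0 ≤ l i) → ∀ α : ℝ, 1 < α →
      ∀ i, J (α • l) i < α * J l i) :
    ∀ l₁ l₂ : Fin n → ℝ, (∀ i, 0 ≤ l₁ i) → (∀ i, 0 ≤ l₂ i) →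
      J l₁ = l₁ → J l₂ = l₂ → l₁ = l₂ := by
  -- strict positivity of J on the nonnegative orthant
  have hstrict : ∀ l : Fin n → ℝ, (∀ i, 0 ≤ l i) → ∀ i, 0 < J l i := by
    intro l hl i
    have h2 := hscal l hl 2 one_lt_two i
    have h0 : 0 ≤ J ((2:ℝ) • l) i := by
      refine hpos _ (fun j => ?_) i
      have := hl j
      simp only [Pi.smul_apply, smul_eq_mul]
      linarith
    linarith
  -- key: any fixed point is ≤ any other fixed point
  have key : ∀ l₁ l₂ : Fin n → ℝ, (∀ i, 0 ≤ l₁ i) → (∀ i, 0 ≤ l₂ i) →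
      J l₁ = l₁ → J l₂ = l₂ → ∀ i, l₁ i ≤ l₂ i := by
    intro l₁ l₂ h1 h2 hf1 hf2 i
    by_contra h
    push_neg at h
    have hne : (Finset.univ : Finset (Fin n)).Nonempty := ⟨i, Finset.mem_univ i⟩
    have h2pos : ∀ j, 0 < l₂ j := by
      intro j; rw [← hf2]; exact hstrict l₂ h2 j
    set α := Finset.univ.sup' hne (fun j => l₁ j / l₂ j) with hα
    have hα1 : 1 < α := by
      have ha : l₁ i / l₂ i ≤ α := by
        rw [hα]
        exact Finset.le_sup' (fun j => l₁ j / l₂ j) (Finset.mem_univ i)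
      have hb : 1 < l₁ i / l₂ i := (one_lt_div (h2pos i)).mpr h
      linarith
    have hle : ∀ j, l₁ j ≤ α * l₂ j := by
      intro j
      have : l₁ j / l₂ j ≤ α := by
        rw [hα]
        exact Finset.le_sup' (fun j' => l₁ j' / l₂ j') (Finset.mem_univ j)
      exact (div_le_iff₀ (h2pos j)).mp this
    obtain ⟨k, -, hk⟩ := Finset.exists_mem_eq_sup' hne (fun j => l₁ j / l₂ j)
    have hk' : l₁ k = α * l₂ k := by
      rw [hα, hk, div_mul_cancel₀ _ (h2pos k).ne']
    have hlt : l₁ k < α * l₂ k := by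
      have hm : J l₁ k ≤ J (α • l₂) k := by
        refine hmono _ _ h1 (fun j => ?_) k
        simpa using hle j
      have hs : J (α • l₂) k < α * J l₂ k := hscal l₂ h2 α hα1 k
      rw [hf1] at hm
      rw [hf2] at hs
      linarith
    linarith
  intro l₁ l₂ h1 h2 hf1 hf2
  funext j
  exact le_antisymm (key l₁ l₂ h1 h2 hf1 hf2 j) (key l₂ l₁ h2 h1 hf2 hf1 j)
end

section
/- Let J : ℝ_{≥0}^n → ℝ_{≥0}^n be a continuous standard function (positive, monotone, scalable) that has a fixed point λ*. Then the synchronous iteration λ(t+1) = J(λ(t)) converges to λ* from any starting point λ(0) ≥ 0. -/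
theorem stmt14 {n : ℕ} (J : (Fin n → ℝ) → (Fin n → ℝ)) (hcont : Continuous J)
    (hpos : ∀ l : Fin n → ℝ, (∀ i, 0 ≤ l i) → ∀ i, 0 ≤ J l i)
    (hmono : ∀ l l' : Fin n → ℝ, (∀ i, 0 ≤ l' i) → (∀ i, l' i ≤ l i) →
      ∀ i, J l' i ≤ J l i)
    (hscal : ∀ l : Fin n → ℝ, (∀ i, 0 ≤ l i) → ∀ α : ℝ, 1 < α →
      ∀ i, J (α • l) i < α * J l i)
    (lamStar : Fin n → ℝ) (hstar0 : ∀ i, 0 ≤ lamStar i) (hfix : J lamStar = lamStar) :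
    ∀ lam0 : Fin n → ℝ, (∀ i, 0 ≤ lam0 i) →
      Filter.Tendsto (fun t : ℕ => J^[t] lam0) Filter.atTop (nhds lamStar) := by
  intro lam0 hlam0
  rcases Nat.eq_zero_or_pos n with hn | hn
  · subst hn
    have heq : (fun t : ℕ => J^[t] lam0) = fun _ => lamStar := by
      funext t i; exact i.elim0
    rw [heq]; exact tendsto_const_nhds
  haveI : Nonempty (Fin n) := ⟨⟨0, hn⟩⟩
  -- J 0 is strictly positive
  have hJ0 : ∀ i, 0 < J 0 i := by
    intro i
    have h := hscal 0 (fun _ => le_rfl) 2 one_lt_two i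
    rw [smul_zero] at h
    linarith
  -- any nonnegative fixed point is strictly positive
  have hposfix : ∀ x : Fin n → ℝ, (∀ i, 0 ≤ x i) → J x = x → ∀ i, 0 < x i := by
    intro x hx hfx i
    have h := hmono x 0 (fun _ => le_rfl) hx i
    rw [hfx] at h
    exact lt_of_lt_of_le (hJ0 i) h
  -- one-sided uniqueness
  have key : ∀ x y : Fin n → ℝ, (∀ i, 0 ≤ x i) → (∀ i, 0 ≤ y i) →
      J x = x → J y = y → ∀ i, y i ≤ x i := by
    intro x y hx hy hfx hfy i
    by_contra hlt
    push_neg at hlt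
    have hxpos := hposfix x hx hfx
    have hne : (Finset.univ : Finset (Fin n)).Nonempty := ⟨i, Finset.mem_univ i⟩
    set α := Finset.univ.sup' hne (fun j => y j / x j) with hα
    have hα1 : (1 : ℝ) < α :=
      lt_of_lt_of_le ((one_lt_div (hxpos i)).mpr hlt)
        (Finset.le_sup' (fun j => y j / x j) (Finset.mem_univ i))
    have hle : ∀ k, y k ≤ α * x k := fun k =>
      (div_le_iff₀ (hxpos k)).mp
        (Finset.le_sup' (fun j => y j / x j) (Finset.mem_univ k))
    obtain ⟨j, -, hj⟩ := Finset.exists_mem_eq_sup' hne (fun j => y j / x j)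
    have hyj : y j = α * x j := by
      rw [hα, hj]
      exact (div_mul_cancel₀ _ (hxpos j).ne').symm
    have hcontr : y j < y j := by
      calc y j = J y j := (congrFun hfy j).symm
        _ ≤ J (α • x) j := hmono (α • x) y hy
            (fun k => by simpa [smul_eq_mul] using hle k) j
        _ < α * J x j := hscal x hx α hα1 j
        _ = α * x j := by rw [hfx]
        _ = y j := hyj.symm
    exact lt_irrefl _ hcontr
  have uniq : ∀ x : Fin n → ℝ, (∀ i, 0 ≤ x i) → J x = x → x = lamStar := by
    intro x hx hfx
    funext i
    exact le_antisymm (key lamStar x hstar0 hx hfix hfx i)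
      (key x lamStar hx hstar0 hfx hfix i)
  have hstarpos := hposfix lamStar hstar0 hfix
  -- lower sequence: iterates from 0
  set u : ℕ → Fin n → ℝ := fun t => J^[t] 0 with hu
  have hustep : ∀ t, u (t + 1) = J (u t) := fun t => Function.iterate_succ_apply' J t 0
  have hu0 : ∀ t i, 0 ≤ u t i := by
    intro t
    induction t with
    | zero => intro i; exact le_rfl
    | succ t ih => rw [hustep]; exact hpos _ ih
  have huub : ∀ t i, u t i ≤ lamStar i := by
    intro t
    induction t with
    | zero => exact hstar0
    | succ t ih =>
      intro i
      rw [hustep]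
      have := hmono lamStar (u t) (hu0 t) ih i
      rwa [hfix] at this
  have humono : ∀ t i, u t i ≤ u (t + 1) i := by
    intro t
    induction t with
    | zero => intro i; rw [hustep]; exact hpos _ (hu0 0) i
    | succ t ih =>
      intro i
      rw [hustep (t + 1), hustep t]
      exact hmono (J (u t)) (u t) (hu0 t) (fun k => by rw [← hustep]; exact ih k) i
  have humono' : ∀ i, Monotone (fun t => u t i) :=
    fun i => monotone_nat_of_le_succ (fun t => humono t i)
  have hubdd : ∀ i, BddAbove (Set.range (fun t => u t i)) := by
    intro i
    refine ⟨lamStar i, ?_⟩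
    rintro x ⟨t, rfl⟩
    exact huub t i
  set L : Fin n → ℝ := fun i => ⨆ t, u t i with hL
  have huL : Filter.Tendsto u Filter.atTop (nhds L) := by
    rw [tendsto_pi_nhds]
    intro i
    exact tendsto_atTop_ciSup (humono' i) (hubdd i)
  have hLfix : J L = L := by
    have h1 : Filter.Tendsto (fun t => u (t + 1)) Filter.atTop (nhds L) :=
      huL.comp (Filter.tendsto_add_atTop_nat 1)
    have h2 : Filter.Tendsto (fun t => J (u t)) Filter.atTop (nhds (J L)) :=
      (hcont.tendsto L).comp huL
    have h3 : (fun t => u (t + 1)) = fun t => J (u t) := funext hustep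
    rw [h3] at h1
    exact tendsto_nhds_unique h2 h1
  have hL0 : ∀ i, 0 ≤ L i := by
    intro i
    exact le_trans (hu0 0 i) (le_ciSup (hubdd i) 0)
  have hLstar : L = lamStar := uniq L hL0 hLfix
  have huLstar : Filter.Tendsto u Filter.atTop (nhds lamStar) := hLstar ▸ huL
  -- choose α with lam0 ≤ α • lamStar
  have hne : (Finset.univ : Finset (Fin n)).Nonempty := ⟨⟨0, hn⟩, Finset.mem_univ _⟩
  set α : ℝ := 2 + Finset.univ.sup' hne (fun i => lam0 i / lamStar i) with hαdef
  have hsupnn : 0 ≤ Finset.univ.sup' hne (fun i => lam0 i / lamStar i) := by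
    have i0 : Fin n := ⟨0, hn⟩
    exact le_trans (div_nonneg (hlam0 i0) (hstar0 i0))
      (Finset.le_sup' (fun i => lam0 i / lamStar i) (Finset.mem_univ i0))
  have hα1 : (1 : ℝ) < α := by
    rw [hαdef]; linarith
  have hub : ∀ i, lam0 i ≤ α * lamStar i := by
    intro i
    have h2 : lam0 i / lamStar i ≤ α := by
      have := Finset.le_sup' (fun i => lam0 i / lamStar i) (Finset.mem_univ i)
      rw [hαdef]; linarith
    exact (div_le_iff₀ (hstarpos i)).mp h2
  -- upper sequence: iterates from α • lamStar
  set v : ℕ → Fin n → ℝ := fun t => J^[t] (α • lamStar) with hv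
  have hvstep : ∀ t, v (t + 1) = J (v t) :=
    fun t => Function.iterate_succ_apply' J t (α • lamStar)
  have hvlb : ∀ t i, lamStar i ≤ v t i := by
    intro t
    induction t with
    | zero =>
      intro i
      have : lamStar i ≤ α * lamStar i := by nlinarith [hstar0 i]
      simpa [hv, smul_eq_mul] using this
    | succ t ih =>
      intro i
      rw [hvstep]
      have := hmono (v t) lamStar hstar0 ih i
      rwa [hfix] at this
  have hv0 : ∀ t i, 0 ≤ v t i := fun t i => le_trans (hstar0 i) (hvlb t i)
  have hvdec : ∀ t i, v (t + 1) i ≤ v t i := by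
    intro t
    induction t with
    | zero =>
      intro i
      rw [hvstep]
      have h1 := hscal lamStar hstar0 α hα1 i
      rw [hfix] at h1
      have : v 0 i = α * lamStar i := by simp [hv, smul_eq_mul]
      rw [this]
      exact le_of_lt h1
    | succ t ih =>
      intro i
      rw [hvstep (t + 1)]
      calc J (v (t + 1)) i ≤ J (v t) i := hmono (v t) (v (t + 1)) (hv0 (t + 1)) ih i
        _ = v (t + 1) i := (congrFun (hvstep t) i).symm
  have hvanti : ∀ i, Antitone (fun t => v t i) :=
    fun i => antitone_nat_of_succ_le (fun t => hvdec t i)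
  have hvbdd : ∀ i, BddBelow (Set.range (fun t => v t i)) := by
    intro i
    refine ⟨lamStar i, ?_⟩
    rintro x ⟨t, rfl⟩
    exact hvlb t i
  set M : Fin n → ℝ := fun i => ⨅ t, v t i with hM
  have hvM : Filter.Tendsto v Filter.atTop (nhds M) := by
    rw [tendsto_pi_nhds]
    intro i
    exact tendsto_atTop_ciInf (hvanti i) (hvbdd i)
  have hMfix : J M = M := by
    have h1 : Filter.Tendsto (fun t => v (t + 1)) Filter.atTop (nhds M) :=
      hvM.comp (Filter.tendsto_add_atTop_nat 1)
    have h2 : Filter.Tendsto (fun t => J (v t)) Filter.atTop (nhds (J M)) :=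
      (hcont.tendsto M).comp hvM
    have h3 : (fun t => v (t + 1)) = fun t => J (v t) := funext hvstep
    rw [h3] at h1
    exact tendsto_nhds_unique h2 h1
  have hM0 : ∀ i, 0 ≤ M i := by
    intro i
    refine le_trans (hstar0 i) (le_ciInf fun t => hvlb t i)
  have hMstar : M = lamStar := uniq M hM0 hMfix
  have hvMstar : Filter.Tendsto v Filter.atTop (nhds lamStar) := hMstar ▸ hvM
  -- sandwich
  set w : ℕ → Fin n → ℝ := fun t => J^[t] lam0 with hw
  have hwstep : ∀ t, w (t + 1) = J (w t) :=
    fun t => Function.iterate_succ_apply' J t lam0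
  have hsand : ∀ t, (∀ i, 0 ≤ w t i) ∧ (∀ i, u t i ≤ w t i) ∧ (∀ i, w t i ≤ v t i) := by
    intro t
    induction t with
    | zero =>
      refine ⟨hlam0, fun i => hlam0 i, fun i => ?_⟩
      simpa [hv, hw, smul_eq_mul] using hub i
    | succ t ih =>
      obtain ⟨h0, hl, hr⟩ := ih
      refine ⟨?_, ?_, ?_⟩
      · intro i; rw [hwstep]; exact hpos _ h0 i
      · intro i; rw [hwstep, hustep]; exact hmono (w t) (u t) (hu0 t) hl i
      · intro i; rw [hwstep, hvstep]; exact hmono (v t) (w t) h0 hr i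
  rw [tendsto_pi_nhds]
  intro i
  have hul : Filter.Tendsto (fun t => u t i) Filter.atTop (nhds (lamStar i)) :=
    (tendsto_pi_nhds.mp huLstar) i
  have hvl : Filter.Tendsto (fun t => v t i) Filter.atTop (nhds (lamStar i)) :=
    (tendsto_pi_nhds.mp hvMstar) i
  exact tendsto_of_tendsto_of_tendsto_of_le_of_le hul hvl
    (fun t => (hsand t).2.1 i) (fun t => (hsand t).2.2 i)
end

section
/- Fix Hermitian matrices R_k ⪰ 0 (k = 1,...,n), R ⪰ 0 with R ≠ 0, and γ > 0. Define F(λ) = μ₊( (1 + 1/γ)^{-1}(I + Σ_k λ_k R_k), R ), where μ₊(A,B) = inf{x^H A x : x^H B x = 1}. Then F is scalable: for all α > 1 and λ ≥ 0, α·F(λ) > F(αλ). -/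
open Matrix ComplexOrder

lemma quadForm_add {n : ℕ} (A B : Matrix (Fin n) (Fin n) ℂ) (x : Fin n → ℂ) :
    quadForm (A + B) x = quadForm A x + quadForm B x := by
  simp [quadForm, Matrix.add_mulVec, dotProduct_add]

lemma quadForm_smul {n : ℕ} (a : ℝ) (A : Matrix (Fin n) (Fin n) ℂ) (x : Fin n → ℂ) :
    quadForm ((a : ℂ) • A) x = a * quadForm A x := by
  simp [quadForm, Matrix.smul_mulVec, dotProduct_smul]

lemma quadForm_sum {n m : ℕ} (f : Fin m → Matrix (Fin n) (Fin n) ℂ) (x : Fin n → ℂ)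
    (s : Finset (Fin m)) :
    quadForm (∑ k ∈ s, f k) x = ∑ k ∈ s, quadForm (f k) x := by
  induction s using Finset.induction with
  | empty => simp [quadForm]
  | insert _ _ h ih => rw [Finset.sum_insert h, Finset.sum_insert h, quadForm_add, ih]

lemma quadForm_one {n : ℕ} (x : Fin n → ℂ) :
    quadForm 1 x = ∑ i, ‖x i‖^2 := by
  unfold quadForm
  rw [Matrix.one_mulVec]
  unfold dotProduct
  rw [Complex.re_sum]
  congr 1; ext i
  simp [Pi.star_apply, Complex.star_def]
  rw [Complex.sq_norm, Complex.normSq_apply]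

lemma quadForm_nonneg {n : ℕ} {A : Matrix (Fin n) (Fin n) ℂ} (h : A.PosSemidef)
    (x : Fin n → ℂ) : 0 ≤ quadForm A x :=
  h.re_dotProduct_nonneg x

lemma quadForm_smul_vec {n : ℕ} (A : Matrix (Fin n) (Fin n) ℂ) (t : ℝ) (x : Fin n → ℂ) :
    quadForm A ((t : ℂ) • x) = t^2 * quadForm A x := by
  simp [quadForm, Matrix.mulVec_smul, dotProduct_smul, smul_dotProduct, star_smul]
  ring

lemma quadForm_le {n : ℕ} (R : Matrix (Fin n) (Fin n) ℂ) (x : Fin n → ℂ) :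
    quadForm R x ≤ (∑ i, ∑ j, ‖R i j‖) * ∑ k, ‖x k‖^2 := by
  have hs : ∀ i j : Fin n, ‖x i‖ * ‖x j‖ ≤ ∑ k, ‖x k‖^2 := by
    intro i j
    have hi : ‖x i‖^2 ≤ ∑ k, ‖x k‖^2 :=
      Finset.single_le_sum (fun k _ => sq_nonneg ‖x k‖) (Finset.mem_univ i)
    have hj : ‖x j‖^2 ≤ ∑ k, ‖x k‖^2 :=
      Finset.single_le_sum (fun k _ => sq_nonneg ‖x k‖) (Finset.mem_univ j)
    nlinarith [norm_nonneg (x i), norm_nonneg (x j), sq_nonneg (‖x i‖ - ‖x j‖)]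
  calc quadForm R x ≤ ‖star x ⬝ᵥ R.mulVec x‖ := Complex.re_le_norm _
    _ = ‖∑ i, star x i * (∑ j, R i j * x j)‖ := by rfl
    _ ≤ ∑ i, ‖star x i * (∑ j, R i j * x j)‖ := norm_sum_le _ _
    _ ≤ ∑ i, ∑ j, ‖x i‖ * (‖R i j‖ * ‖x j‖) := by
        refine Finset.sum_le_sum fun i _ => ?_
        rw [norm_mul, ← Finset.mul_sum]
        gcongr
        · simp
        calc ‖∑ j, R i j * x j‖ ≤ ∑ j, ‖R i j * x j‖ := norm_sum_le _ _
          _ = ∑ j, ‖R i j‖ * ‖x j‖ := by simp [norm_mul]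
    _ ≤ ∑ i, ∑ j, ‖R i j‖ * ∑ k, ‖x k‖^2 := by
        refine Finset.sum_le_sum fun i _ => Finset.sum_le_sum fun j _ => ?_
        have := hs i j
        have h0 : (0:ℝ) ≤ ‖R i j‖ := norm_nonneg _
        nlinarith
    _ = (∑ i, ∑ j, ‖R i j‖) * ∑ k, ‖x k‖^2 := by
        rw [Finset.sum_mul]; congr 1; ext i; rw [Finset.sum_mul]

lemma exists_unit {n : ℕ} {R : Matrix (Fin n) (Fin n) ℂ} (hR : R.PosSemidef) (hR0 : R ≠ 0) :
    ∃ x : Fin n → ℂ, quadForm R x = 1 := by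
  by_contra hx
  push_neg at hx
  have hzero : ∀ x : Fin n → ℂ, quadForm R x = 0 := by
    intro x
    by_contra h0
    have hpos : 0 < quadForm R x := lt_of_le_of_ne (quadForm_nonneg hR x) (Ne.symm h0)
    have := hx ((((Real.sqrt (quadForm R x))⁻¹ : ℝ) : ℂ) • x)
    rw [quadForm_smul_vec] at this
    apply this
    rw [inv_pow, Real.sq_sqrt hpos.le]
    field_simp
  apply hR0
  have hv : ∀ x : Fin n → ℂ, R *ᵥ x = 0 := by
    intro x
    rw [← hR.dotProduct_mulVec_zero_iff x]
    have h1 : 0 ≤ star x ⬝ᵥ R *ᵥ x := hR.dotProduct_mulVec_nonneg x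
    have h2 : (star x ⬝ᵥ R *ᵥ x).re = 0 := hzero x
    have h3 := Complex.nonneg_iff.mp h1
    exact Complex.ext (by simpa using h2) (by simpa using h3.2.symm)
  ext i j
  have := congrFun (hv (Pi.single j 1)) i
  simpa [Matrix.mulVec_single] using this

lemma quadForm_expand {N m : ℕ} (Rk : Fin m → Matrix (Fin N) (Fin N) ℂ)
    (c : ℝ) (μ : Fin m → ℝ) (x : Fin N → ℂ) :
    quadForm (((c : ℂ))⁻¹ • (1 + ∑ k, ((μ k : ℝ) : ℂ) • Rk k)) x
      = c⁻¹ * ((∑ i, ‖x i‖^2) + ∑ k, μ k * quadForm (Rk k) x) := by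
  rw [← Complex.ofReal_inv, quadForm_smul, quadForm_add, quadForm_one, quadForm_sum]
  simp_rw [quadForm_smul]

theorem stmt17 {N m : ℕ} (R : Matrix (Fin N) (Fin N) ℂ)
    (Rk : Fin m → Matrix (Fin N) (Fin N) ℂ)
    (hR : R.PosSemidef) (hR0 : R ≠ 0) (hRk : ∀ k, (Rk k).PosSemidef)
    (γ : ℝ) (hγ : 0 < γ) :
    ∀ (α : ℝ), 1 < α → ∀ l : Fin m → ℝ, (∀ k, 0 ≤ l k) →
      muPlus ((((1 + 1 / γ : ℝ) : ℂ))⁻¹ • (1 + ∑ k, ((α * l k : ℝ) : ℂ) • Rk k)) R <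
      α * muPlus ((((1 + 1 / γ : ℝ) : ℂ))⁻¹ • (1 + ∑ k, ((l k : ℝ) : ℂ) • Rk k)) R := by
  intro α hα l hl
  set c : ℝ := 1 + 1/γ with hcdef
  have hc : 0 < c := by positivity
  set C : ℝ := ∑ i, ∑ j, ‖R i j‖ with hCdef
  have hq0 : ∀ x : Fin N → ℂ, quadForm R x = 1 →
      0 < C ∧ C⁻¹ ≤ ∑ i, ‖x i‖^2 := by
    intro x hx
    have h1 : (1:ℝ) ≤ C * ∑ i, ‖x i‖^2 := by rw [← hx]; exact quadForm_le R x
    have hs : 0 ≤ ∑ i, ‖x i‖^2 := Finset.sum_nonneg fun i _ => sq_nonneg _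
    have hC : 0 < C := by nlinarith
    exact ⟨hC, by rw [inv_le_iff_one_le_mul₀ hC]; linarith [h1]⟩
  obtain ⟨x0, hx0⟩ := exists_unit hR hR0
  have hC : 0 < C := (hq0 x0 hx0).1
  have hα1 : 0 < α - 1 := by linarith
  set ε : ℝ := (α - 1) * c⁻¹ * C⁻¹ with hεdef
  have hε : 0 < ε := by positivity
  set M1 := (((c : ℝ) : ℂ))⁻¹ • (1 + ∑ k, ((l k : ℝ) : ℂ) • Rk k) with hM1
  set M2 := (((c : ℝ) : ℂ))⁻¹ • (1 + ∑ k, ((α * l k : ℝ) : ℂ) • Rk k) with hM2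
  set S1 := {r : ℝ | ∃ x : Fin N → ℂ, quadForm R x = 1 ∧ quadForm M1 x = r} with hS1
  set S2 := {r : ℝ | ∃ x : Fin N → ℂ, quadForm R x = 1 ∧ quadForm M2 x = r} with hS2
  have hS2bdd : BddBelow S2 := by
    refine ⟨0, fun r hr => ?_⟩
    obtain ⟨x, hx, rfl⟩ := hr
    rw [hM2, quadForm_expand]
    have h1 : 0 ≤ ∑ i, ‖x i‖^2 := Finset.sum_nonneg fun i _ => sq_nonneg _
    have h2 : 0 ≤ ∑ k, (α * l k) * quadForm (Rk k) x :=
      Finset.sum_nonneg fun k _ =>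
        mul_nonneg (mul_nonneg (by linarith) (hl k)) (quadForm_nonneg (hRk k) x)
    positivity
  have hS1ne : S1.Nonempty := ⟨_, x0, hx0, rfl⟩
  have key : ∀ x : Fin N → ℂ, quadForm R x = 1 →
      quadForm M2 x ≤ α * quadForm M1 x - ε := by
    intro x hx
    rw [hM1, hM2, quadForm_expand, quadForm_expand]
    obtain ⟨-, hq⟩ := hq0 x hx
    have hsum : ∑ k, (α * l k) * quadForm (Rk k) x
        = α * ∑ k, l k * quadForm (Rk k) x := by
      rw [Finset.mul_sum]; exact Finset.sum_congr rfl fun k _ => by ring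
    rw [hsum, hεdef]
    have h3 : (α - 1) * c⁻¹ * C⁻¹ ≤ (α - 1) * c⁻¹ * ∑ i, ‖x i‖^2 := by
      have h4 : 0 ≤ (α - 1) * c⁻¹ := by positivity
      exact mul_le_mul_of_nonneg_left hq h4
    nlinarith [h3]
  have step1 : ∀ r ∈ S1, sInf S2 + ε ≤ α * r := by
    rintro r ⟨x, hx, rfl⟩
    have hmem : quadForm M2 x ∈ S2 := ⟨x, hx, rfl⟩
    have := csInf_le hS2bdd hmem
    linarith [key x hx]
  have step2 : sInf S2 + ε ≤ α * sInf S1 := by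
    have h5 : (sInf S2 + ε) / α ≤ sInf S1 := by
      refine le_csInf hS1ne fun r hr => ?_
      rw [div_le_iff₀ (by linarith : (0:ℝ) < α)]
      calc sInf S2 + ε ≤ α * r := step1 r hr
        _ = r * α := by ring
    calc sInf S2 + ε = α * ((sInf S2 + ε) / α) := by field_simp
      _ ≤ α * sInf S1 := mul_le_mul_of_nonneg_left h5 (by linarith)
  show sInf S2 < α * sInf S1
  linarith
end
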